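/- Let X be a paracompact space, (Z_s)_{s∈S} a family of equiconnected metrizable spaces, a ∈ ∏_{s∈S} Z_s, and g : X → ⊡_{s∈S} Z_s a Baire-one map into the small box product σ(a). Then there exists a separately continuous map f : X² → ⊡_{s∈S} Z_s such that f(x,x) = g(x) for every x ∈ X. -/

import Mathlib

open Filter Topology Set

/-- The box topology on a product of topological spaces: generated by all boxes
`∏ s, G s` with each `G s` open. -/
def boxTopology {S : Type*} {X : S → Type*} [∀ s, TopologicalSpace (X s)] :
    TopologicalSpace (∀ s, X s) :=
  TopologicalSpace.generateFrom
    {U | ∃ G : ∀ s, Set (X s), (∀ s, IsOpen (G s)) ∧ U = Set.univ.pi G}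

/-- `σ(a)`: the set of points differing from `a` in only finitely many coordinates. -/
def smallBox {S : Type*} {X : S → Type*} (a : ∀ s, X s) : Set (∀ s, X s) :=
  {x | {s | x s ≠ a s}.Finite}

section Gadget

attribute [local instance] PiCountable.metricSpace

/-- Bundled data for the one-coordinate construction. -/
structure Gdata (X Z : Type*) [TopologicalSpace X] [MetricSpace Z] where
  lam : Z → Z → unitInterval → Z
  hlamc : Continuous fun p : Z × Z × unitInterval => lam p.1 p.2.1 p.2.2
  hl0 : ∀ u v, lam u v 0 = u
  hl1 : ∀ u v, lam u v 1 = v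
  hld : ∀ u t, lam u u t = u
  c : Z
  h : ℕ → X → Z
  hhc : ∀ n, Continuous (h n)
  g : X → Z
  hg : ∀ x, Tendsto (fun n => h n x) atTop (nhds (g x))

namespace Gdata

variable {X : Type*} [TopologicalSpace X] {Z : Type*} [MetricSpace Z] (D : Gdata X Z)

theorem lam_cont {W : Type*} [TopologicalSpace W] {p q : W → Z} {t : W → unitInterval}
    (hp : Continuous p) (hq : Continuous q) (ht : Continuous t) :
    Continuous fun w => D.lam (p w) (q w) (t w) :=
  D.hlamc.comp (hp.prodMk (hq.prodMk ht))

theorem tube {z : Z} {G : Set Z} (hG : IsOpen G) (hz : z ∈ G) :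
    ∃ ε > 0, ∀ u v : Z, dist u z < ε → dist v z < ε → ∀ t, D.lam u v t ∈ G := by
  have hc : Continuous fun p : (Z × Z) × unitInterval => D.lam p.1.1 p.1.2 p.2 :=
    D.hlamc.comp ((continuous_fst.comp continuous_fst).prodMk
      (((continuous_snd.comp continuous_fst)).prodMk continuous_snd))
  have hsub : ({(z, z)} : Set (Z × Z)) ×ˢ (univ : Set unitInterval) ⊆
      (fun p : (Z × Z) × unitInterval => D.lam p.1.1 p.1.2 p.2) ⁻¹' G := by
    rintro ⟨⟨u, v⟩, t⟩ ⟨hp, -⟩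
    simp only [mem_singleton_iff, Prod.mk.injEq] at hp
    simp only [mem_preimage, hp.1, hp.2, D.hld, hz]
  obtain ⟨u, v, hu, -, hzu, htv, hsub2⟩ :=
    generalized_tube_lemma isCompact_singleton isCompact_univ (hG.preimage hc) hsub
  obtain ⟨ε, hε, hball⟩ := Metric.isOpen_iff.mp hu (z, z) (hzu rfl)
  refine ⟨ε, hε, fun p q hp hq t => ?_⟩
  have hm : ((p, q), t) ∈ u ×ˢ v := by
    constructor
    · apply hball
      rw [Metric.mem_ball, Prod.dist_eq]
      exact max_lt hp hq
    · exact htv trivial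
  exact hsub2 hm

/-- `θ x` measures how far the whole sequence `h · x` is from being constantly `c`. -/
noncomputable def th (x : X) : ℝ := dist (fun n => D.h n x) (fun _ : ℕ => D.c)

theorem th_cont : Continuous D.th :=
  (Continuous.dist (continuous_pi fun n => D.hhc n) continuous_const)

theorem th_nonneg (x : X) : 0 ≤ D.th x := dist_nonneg

theorem th_eq_zero_iff {x : X} : D.th x = 0 ↔ ∀ n, D.h n x = D.c := by
  rw [th, dist_eq_zero]
  constructor
  · intro he n; exact congrFun he n
  · intro hn; funext n; exact hn n

theorem g_eq_c {x : X} (hx : ∀ n, D.h n x = D.c) : D.g x = D.c := by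
  refine tendsto_nhds_unique (D.hg x) ?_
  simpa only [funext hx] using (tendsto_const_nhds : Tendsto (fun _ : ℕ => D.c) atTop (nhds D.c))

noncomputable def H (n : ℕ) (x : X) : Z :=
  D.lam D.c (D.h n x) (projIcc 0 1 zero_le_one ((n : ℝ) * D.th x))

theorem H_cont (n : ℕ) : Continuous (D.H n) :=
  D.lam_cont continuous_const (D.hhc n) (continuous_projIcc.comp (continuous_const.mul D.th_cont))

theorem H_eq_c {x : X} (hx : ∀ n, D.h n x = D.c) (n : ℕ) : D.H n x = D.c := by
  rw [H, hx n, D.hld]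

theorem H_tendsto (x : X) : Tendsto (fun n => D.H n x) atTop (nhds (D.g x)) := by
  by_cases hx : D.th x = 0
  · have hall := D.th_eq_zero_iff.mp hx
    have hgc : D.g x = D.c := D.g_eq_c hall
    have : (fun n => D.H n x) = fun _ => D.c := funext fun n => D.H_eq_c hall n
    rw [this, hgc]
    exact tendsto_const_nhds
  · have hpos : 0 < D.th x := lt_of_le_of_ne (D.th_nonneg x) (Ne.symm hx)
    refine (D.hg x).congr' ?_
    filter_upwards [eventually_ge_atTop ⌈(D.th x)⁻¹⌉₊] with n hn
    have h1 : (1 : ℝ) ≤ (n : ℝ) * D.th x := by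
      have h2 : (D.th x)⁻¹ ≤ (n : ℝ) := le_trans (Nat.le_ceil _) (by exact_mod_cast hn)
      calc (1 : ℝ) = (D.th x)⁻¹ * D.th x := (inv_mul_cancel₀ hx).symm
        _ ≤ (n : ℝ) * D.th x := mul_le_mul_of_nonneg_right h2 hpos.le
    rw [H, projIcc_of_right_le _ h1, show (⟨1, by norm_num⟩ : unitInterval) = 1 from rfl, D.hl1]

noncomputable def Hseq (x : X) : ℕ → Z := fun n => D.H n x

theorem Hseq_cont : Continuous D.Hseq := continuous_pi fun n => D.H_cont n

noncomputable def rho (x y : X) : ℝ := dist (D.Hseq x) (D.Hseq y)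

noncomputable def thH (x : X) : ℝ := dist (D.Hseq x) (fun _ : ℕ => D.c)

theorem rho_conty (x : X) : Continuous fun y => D.rho x y :=
  Continuous.dist continuous_const D.Hseq_cont

theorem rho_contx (y : X) : Continuous fun x => D.rho x y :=
  Continuous.dist D.Hseq_cont continuous_const

theorem thH_cont : Continuous D.thH := Continuous.dist D.Hseq_cont continuous_const

theorem rho_nonneg (x y : X) : 0 ≤ D.rho x y := dist_nonneg

theorem thH_nonneg (x : X) : 0 ≤ D.thH x := dist_nonneg

theorem rho_self (x : X) : D.rho x x = 0 := dist_self _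

theorem rho_eq_zero {x y : X} (h : D.rho x y = 0) : D.Hseq x = D.Hseq y := by
  rwa [rho, dist_eq_zero] at h

theorem thH_eq_zero_iff {x : X} : D.thH x = 0 ↔ ∀ n, D.H n x = D.c := by
  rw [thH, dist_eq_zero]
  constructor
  · intro he n; exact congrFun he n
  · intro hn; funext n; exact hn n

theorem g_eq_c_of_thH {x : X} (hx : D.thH x = 0) : D.g x = D.c := by
  refine tendsto_nhds_unique (D.H_tendsto x) ?_
  have := D.thH_eq_zero_iff.mp hx
  simpa only [funext this] using (tendsto_const_nhds : Tendsto (fun _ : ℕ => D.c) atTop (nhds D.c))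

theorem dist_H_le {x y : X} {n : ℕ} (hlt : D.rho x y < (1 / 2) ^ n) :
    dist (D.H n x) (D.H n y) ≤ D.rho x y := by
  have := @PiCountable.dist_le_dist_pi_of_dist_lt ℕ _ (fun _ => Z) _ (D.Hseq x) (D.Hseq y) n ?_
  · exact this
  · rw [Encodable.encode_nat]; rw [one_div] at hlt; exact hlt

end Gdata

end Gadget
section Gadget2

namespace Gdata

variable {X : Type*} [TopologicalSpace X] {Z : Type*} [MetricSpace Z] (D : Gdata X Z)

/-- chart weight at level `m`. -/
noncomputable def w (m : ℕ) (x y : X) : unitInterval :=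
  projIcc 0 1 zero_le_one (2 - 4 ^ (m + 1) * D.rho x y)

theorem w_conty (m : ℕ) (x : X) : Continuous fun y => D.w m x y :=
  continuous_projIcc.comp (continuous_const.sub (continuous_const.mul (D.rho_conty x)))

theorem w_contx (m : ℕ) (y : X) : Continuous fun x => D.w m x y :=
  continuous_projIcc.comp (continuous_const.sub (continuous_const.mul (D.rho_contx y)))

theorem w_eq_one {m : ℕ} {x y : X} (h : 4 ^ (m + 1) * D.rho x y ≤ 1) : D.w m x y = 1 := by
  rw [w, projIcc_of_right_le _ (by linarith)]; rfl

theorem w_eq_zero {m : ℕ} {x y : X} (h : 2 ≤ 4 ^ (m + 1) * D.rho x y) : D.w m x y = 0 := by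
  rw [w, projIcc_of_le_left _ (by linarith)]; rfl

theorem w_ne_zero {m : ℕ} {x y : X} (h : D.w m x y ≠ 0) : 4 ^ (m + 1) * D.rho x y < 2 := by
  by_contra hc
  exact h (D.w_eq_zero (not_lt.mp hc))

/-- iterated equiconnecting mixes of the `H n x` along weights `w`. -/
noncomputable def B (x y : X) (m : ℕ) : Z :=
  Nat.rec (D.H 0 x) (fun k ih => D.lam ih (D.H (k + 1) x) (D.w k x y)) m

theorem B_zero (x y : X) : D.B x y 0 = D.H 0 x := rfl

theorem B_succ (x y : X) (m : ℕ) :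
    D.B x y (m + 1) = D.lam (D.B x y m) (D.H (m + 1) x) (D.w m x y) := rfl

theorem B_conty (x : X) (m : ℕ) : Continuous fun y => D.B x y m := by
  induction m with
  | zero => exact continuous_const
  | succ m ih => exact D.lam_cont ih continuous_const (D.w_conty m x)

theorem B_contx (y : X) (m : ℕ) : Continuous fun x => D.B x y m := by
  induction m with
  | zero => exact D.H_cont 0
  | succ m ih => exact D.lam_cont ih (D.H_cont (m + 1)) (D.w_contx m y)

theorem B_eq_c {x : X} (hx : ∀ n, D.H n x = D.c) (y : X) (m : ℕ) : D.B x y m = D.c := by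
  induction m with
  | zero => exact hx 0
  | succ m ih => rw [B_succ, ih, hx (m + 1), D.hld]

theorem B_stab {x y : X} {m : ℕ} (hw : ∀ j, m ≤ j → D.w j x y = 0) :
    ∀ k, m ≤ k → D.B x y k = D.B x y m := by
  intro k hk
  induction k, hk using Nat.le_induction with
  | base => rfl
  | succ k hk ih => rw [B_succ, hw k hk, D.hl0, ih]

theorem exists_stab {x y : X} (h : D.rho x y ≠ 0) : ∃ m, 2 < 4 ^ m * D.rho x y := by
  have hpos : 0 < D.rho x y := lt_of_le_of_ne (D.rho_nonneg x y) (Ne.symm h)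
  obtain ⟨m, hm⟩ := pow_unbounded_of_one_lt (2 / D.rho x y) (by norm_num : (1 : ℝ) < 4)
  exact ⟨m, by rwa [div_lt_iff₀ hpos] at hm⟩

theorem stab_after {x y : X} {m : ℕ} (hm : 2 < 4 ^ m * D.rho x y) :
    ∀ j, m ≤ j → D.w j x y = 0 := by
  intro j hj
  apply D.w_eq_zero
  calc (2 : ℝ) ≤ 4 ^ m * D.rho x y := hm.le
    _ ≤ 4 ^ (j + 1) * D.rho x y := by
        apply mul_le_mul_of_nonneg_right _ (D.rho_nonneg x y)
        exact pow_le_pow_right₀ (by norm_num) (le_trans hj (Nat.le_succ j))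

/-- The stabilized value of the iterated mixes; on `rho = 0` we take `g x`. -/
noncomputable def F0 (x y : X) : Z :=
  if hr : D.rho x y = 0 then D.g x else D.B x y (Nat.find (D.exists_stab hr))

theorem F0_diag (x : X) : D.F0 x x = D.g x := dif_pos (D.rho_self x)

theorem F0_eq {x y : X} {m : ℕ} (hr : D.rho x y ≠ 0) (hm : ∀ j, m ≤ j → D.w j x y = 0) :
    D.F0 x y = D.B x y m := by
  rw [F0, dif_neg hr]
  set M := Nat.find (D.exists_stab hr) with hM
  have hMs : 2 < 4 ^ M * D.rho x y := Nat.find_spec (D.exists_stab hr)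
  have h1 : D.B x y (max M m) = D.B x y M := D.B_stab (D.stab_after hMs) _ (le_max_left _ _)
  have h2 : D.B x y (max M m) = D.B x y m := D.B_stab hm _ (le_max_right _ _)
  rw [← h1, h2]

theorem F0_eq_c {x : X} (hx : ∀ n, D.H n x = D.c) (y : X) : D.F0 x y = D.c := by
  by_cases hr : D.rho x y = 0
  · rw [F0, dif_pos hr]
    refine tendsto_nhds_unique (D.H_tendsto x) ?_
    simpa only [funext hx] using (tendsto_const_nhds : Tendsto (fun _ : ℕ => D.c) atTop (nhds D.c))
  · rw [F0, dif_neg hr]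
    exact D.B_eq_c hx y _

open Classical in
theorem F0_form {x y : X} {N : ℕ} (hr : D.rho x y ≠ 0) (hN : 4 ^ (N + 2) * D.rho x y ≤ 1) :
    ∃ K t, N + 1 ≤ K ∧ 4 ^ (K + 1) * D.rho x y ≤ 1 ∧
      D.F0 x y = D.lam (D.H (K + 1) x) (D.H (K + 2) x) t := by
  obtain ⟨M, hM⟩ := D.exists_stab hr
  set P : ℕ → Prop := fun m => 4 ^ (m + 1) * D.rho x y ≤ 1 with hP
  have hpos : 0 < D.rho x y := lt_of_le_of_ne (D.rho_nonneg x y) (Ne.symm hr)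
  have hPbound : ∀ k, P k → k < M := by
    intro k hk
    by_contra hc
    push_neg at hc
    have : 4 ^ M * D.rho x y ≤ 4 ^ (k + 1) * D.rho x y := by
      apply mul_le_mul_of_nonneg_right _ (D.rho_nonneg x y)
      exact pow_le_pow_right₀ (by norm_num) (le_trans hc (Nat.le_succ k))
    rw [hP] at hk
    linarith
  set K := Nat.findGreatest P M with hK
  have hPN1 : P (N + 1) := hN
  have hK1 : N + 1 ≤ K := Nat.le_findGreatest (hPbound _ hPN1).le hPN1
  have hPK : P K := Nat.findGreatest_spec (m := N + 1) (hPbound _ hPN1).le hPN1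
  have hmax : ∀ j, K + 2 ≤ j → D.w j x y = 0 := by
    intro j hj
    by_contra hw
    have h2 : 4 ^ (j + 1) * D.rho x y < 2 := D.w_ne_zero hw
    obtain ⟨j', rfl⟩ : ∃ j', j = j' + 1 := ⟨j - 1, by omega⟩
    have hPj' : P j' := by
      rw [hP]
      have h4 : (4 : ℝ) ^ (j' + 1) * D.rho x y * 4 = 4 ^ (j' + 1 + 1) * D.rho x y := by ring
      nlinarith [D.rho_nonneg x y]
    have hj'M : j' < M := hPbound _ hPj'
    exact Nat.findGreatest_is_greatest (by omega) hj'M.le hPj'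
  have hF0 : D.F0 x y = D.B x y (K + 2) := D.F0_eq hr hmax
  have hBK1 : D.B x y (K + 1) = D.H (K + 1) x := by
    rw [B_succ, D.w_eq_one hPK, D.hl1]
  refine ⟨K, D.w (K + 1) x y, hK1, hPK, ?_⟩
  rw [hF0, D.B_succ, hBK1]

end Gdata

end Gadget2
section Gadget3
namespace Gdata

variable {X : Type*} [TopologicalSpace X] {Z : Type*} [MetricSpace Z] (D : Gdata X Z)

theorem F0_conty (x : X) : Continuous fun y => D.F0 x y := by
  rw [continuous_iff_continuousAt]; intro y0
  by_cases hr : D.rho x y0 = 0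
  · have hval : D.F0 x y0 = D.g x := by rw [F0, dif_pos hr]
    rw [ContinuousAt, hval, tendsto_nhds]
    intro G hG hGz
    obtain ⟨ε, hε, htube⟩ := D.tube hG hGz
    obtain ⟨N, hN⟩ := Metric.tendsto_atTop.mp (D.H_tendsto x) ε hε
    have hU : IsOpen {y | 4 ^ (N + 2) * D.rho x y < 1} :=
      isOpen_lt (continuous_const.mul (D.rho_conty x)) continuous_const
    have hy0U : y0 ∈ {y | 4 ^ (N + 2) * D.rho x y < 1} := by
      simp only [mem_setOf_eq, hr, mul_zero]; norm_num
    filter_upwards [hU.mem_nhds hy0U] with y hy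
    by_cases hry : D.rho x y = 0
    · rw [mem_preimage, F0, dif_pos hry]; exact hGz
    · obtain ⟨K, t, hK, hPK, heq⟩ := D.F0_form hry hy.le
      rw [mem_preimage, heq]
      exact htube _ _ (hN (K + 1) (by omega)) (hN (K + 2) (by omega)) t
  · obtain ⟨m, hm⟩ := D.exists_stab hr
    have hV : IsOpen {y | 2 < 4 ^ m * D.rho x y} :=
      isOpen_lt continuous_const (continuous_const.mul (D.rho_conty x))
    refine ((D.B_conty x m).continuousAt).congr ?_
    filter_upwards [hV.mem_nhds hm] with y hy
    have hry : D.rho x y ≠ 0 := by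
      intro h0; rw [h0, mul_zero] at hy; norm_num at hy
    exact (D.F0_eq hry (D.stab_after hy)).symm

theorem F0_contx (y : X) : Continuous fun x => D.F0 x y := by
  rw [continuous_iff_continuousAt]; intro x0
  by_cases hr : D.rho x0 y = 0
  · have hseq_eq : D.Hseq x0 = D.Hseq y := D.rho_eq_zero hr
    have hval : D.F0 x0 y = D.g x0 := by rw [F0, dif_pos hr]
    rw [ContinuousAt, hval, tendsto_nhds]
    intro G hG hGz
    obtain ⟨ε, hε, htube⟩ := D.tube hG hGz
    obtain ⟨N1, hN1⟩ := Metric.tendsto_atTop.mp (D.H_tendsto x0) (ε / 2) (by linarith)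
    obtain ⟨N2, hN2⟩ := pow_unbounded_of_one_lt (2 / ε) (by norm_num : (1 : ℝ) < 4)
    set N := max N1 N2 with hNdef
    have hU : IsOpen {x | 4 ^ (N + 2) * D.rho x y < 1} :=
      isOpen_lt (continuous_const.mul (D.rho_contx y)) continuous_const
    have hx0U : x0 ∈ {x | 4 ^ (N + 2) * D.rho x y < 1} := by
      simp only [mem_setOf_eq, hr, mul_zero]; norm_num
    filter_upwards [hU.mem_nhds hx0U] with x hx
    have hxx0 : D.rho x x0 = D.rho x y := by
      rw [rho, rho, hseq_eq]
    by_cases hry : D.rho x y = 0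
    · have h2 : D.Hseq x = D.Hseq x0 := by
        rw [← hxx0] at hry; exact D.rho_eq_zero hry
      have hgg : D.g x = D.g x0 := by
        refine tendsto_nhds_unique (D.H_tendsto x) ?_
        have he : (fun n => D.H n x) = fun n => D.H n x0 := by
          funext n; exact congrFun h2 n
        rw [he]; exact D.H_tendsto x0
      rw [mem_preimage, F0, dif_pos hry, hgg]; exact hGz
    · obtain ⟨K, t, hK, hPK, heq⟩ := D.F0_form hry hx.le
      rw [mem_preimage, heq]
      have h4pos : (0 : ℝ) < 4 ^ (K + 1) := by positivity
      have hρle : D.rho x y ≤ (4 ^ (K + 1) : ℝ)⁻¹ := by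
        rw [← one_div, le_div_iff₀ h4pos, mul_comm]
        exact hPK
      have key : ∀ m, K + 1 ≤ m → m ≤ K + 2 → dist (D.H m x) (D.g x0) < ε := by
        intro m hm1 hm2
        have hsmall : D.rho x x0 < (1 / 2 : ℝ) ^ m := by
          rw [hxx0]
          have e1 : ((4 : ℝ) ^ (K + 1))⁻¹ = (1 / 2 : ℝ) ^ (2 * (K + 1)) := by
            rw [pow_mul]
            norm_num
            rw [one_div, inv_pow]
          have e2 : ((1 : ℝ) / 2) ^ (2 * (K + 1)) < (1 / 2 : ℝ) ^ m :=
            pow_lt_pow_right_of_lt_one₀ (by norm_num) (by norm_num) (by omega)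
          calc D.rho x y ≤ ((4 : ℝ) ^ (K + 1))⁻¹ := hρle
            _ = (1 / 2 : ℝ) ^ (2 * (K + 1)) := e1
            _ < (1 / 2 : ℝ) ^ m := e2
        have hd1 : dist (D.H m x) (D.H m x0) ≤ D.rho x x0 := D.dist_H_le hsmall
        have hd2 : dist (D.H m x0) (D.g x0) < ε / 2 := hN1 m (by omega)
        have hρε : D.rho x y < ε / 2 := by
          have h42 : (2 : ℝ) / ε < 4 ^ (K + 1) :=
            lt_of_lt_of_le hN2 (pow_le_pow_right₀ (by norm_num) (by omega))
          rw [div_lt_iff₀ hε] at h42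
          have hinv : ((4 : ℝ) ^ (K + 1))⁻¹ < ε / 2 := by
            rw [← one_div, div_lt_div_iff₀ h4pos (by norm_num : (0:ℝ) < 2)]
            nlinarith
          exact lt_of_le_of_lt hρle hinv
        calc dist (D.H m x) (D.g x0)
            ≤ dist (D.H m x) (D.H m x0) + dist (D.H m x0) (D.g x0) := dist_triangle _ _ _
          _ < ε / 2 + ε / 2 := by
              have := hd1.trans_lt (by rwa [hxx0])
              linarith
          _ = ε := by ring
      exact htube _ _ (key (K + 1) le_rfl (by omega)) (key (K + 2) (by omega) le_rfl) t
  · obtain ⟨m, hm⟩ := D.exists_stab hr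
    have hV : IsOpen {x | 2 < 4 ^ m * D.rho x y} :=
      isOpen_lt continuous_const (continuous_const.mul (D.rho_contx y))
    refine ((D.B_contx y m).continuousAt).congr ?_
    filter_upwards [hV.mem_nhds hm] with x hx
    have hrx : D.rho x y ≠ 0 := by
      intro h0; rw [h0, mul_zero] at hx; norm_num at hx
    exact (D.F0_eq hrx (D.stab_after hx)).symm

end Gdata
end Gadget3
section Gadget4
namespace Gdata

variable {X : Type*} [TopologicalSpace X] {Z : Type*} [MetricSpace Z] (D : Gdata X Z)

noncomputable def qr (x y : X) : ℝ :=
  if D.thH y = 0 then 0 else D.thH y / (D.thH y + D.rho x y)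

noncomputable def q (x y : X) : unitInterval := projIcc 0 1 zero_le_one (D.qr x y)

noncomputable def F (x y : X) : Z := D.lam D.c (D.F0 x y) (D.q x y)

theorem q_zero {x y : X} (h : D.thH y = 0) : D.q x y = 0 := by
  rw [q, qr, if_pos h, projIcc_of_le_left _ le_rfl]; rfl

theorem q_one {x y : X} (h : D.thH y ≠ 0) (hρ : D.rho x y = 0) : D.q x y = 1 := by
  have hpos : 0 < D.thH y := lt_of_le_of_ne (D.thH_nonneg y) (Ne.symm h)
  rw [q, qr, if_neg h, hρ, add_zero, div_self h, projIcc_of_right_le _ le_rfl]; rfl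

theorem thH_zero_of_rho_zero {x y : X} (hρ : D.rho x y = 0) (hy : D.thH y = 0) :
    D.thH x = 0 := by
  rw [thH, D.rho_eq_zero hρ, ← thH, hy]

theorem F_diag (x : X) : D.F x x = D.g x := by
  by_cases hθ : D.thH x = 0
  · rw [F, D.q_zero hθ, D.hl0, (D.g_eq_c_of_thH hθ).symm]
  · rw [F, D.q_one hθ (D.rho_self x), D.hl1, D.F0_diag]

theorem F_vanx {x : X} (hx : ∀ n, D.h n x = D.c) (y : X) : D.F x y = D.c := by
  have hH : ∀ n, D.H n x = D.c := D.H_eq_c hx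
  rw [F, D.F0_eq_c hH, D.hld]

theorem F_vany {y : X} (hy : ∀ n, D.h n y = D.c) (x : X) : D.F x y = D.c := by
  have hH : D.thH y = 0 := D.thH_eq_zero_iff.mpr (D.H_eq_c hy)
  rw [F, D.q_zero hH, D.hl0]

theorem F_conty (x : X) : Continuous fun y => D.F x y := by
  by_cases hθx : D.thH x = 0
  · have hH : ∀ n, D.H n x = D.c := D.thH_eq_zero_iff.mp hθx
    have : (fun y => D.F x y) = fun _ => D.c := by
      funext y; rw [F, D.F0_eq_c hH, D.hld]
    rw [this]; exact continuous_const
  · have hqr : Continuous fun y => D.qr x y := by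
      rw [continuous_iff_continuousAt]; intro y0
      by_cases hy0 : D.thH y0 = 0
      · have hρ : D.rho x y0 ≠ 0 := fun h0 => hθx (D.thH_zero_of_rho_zero h0 hy0)
        have hρpos : 0 < D.rho x y0 := lt_of_le_of_ne (D.rho_nonneg x y0) (Ne.symm hρ)
        have hval : D.qr x y0 = 0 := by rw [qr, if_pos hy0]
        rw [ContinuousAt, hval]
        have hbpos : ∀ᶠ y in nhds y0, 0 < D.rho x y :=
          (isOpen_lt continuous_const (D.rho_conty x)).eventually_mem hρpos
        have hub : Tendsto (fun y => D.thH y / D.rho x y) (nhds y0) (nhds 0) := by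
          have h1 : Tendsto (fun y => D.thH y) (nhds y0) (nhds 0) := by
            have h : Tendsto (fun y => D.thH y) (nhds y0) (nhds (D.thH y0)) :=
              D.thH_cont.continuousAt
            rwa [hy0] at h
          have h2 : Tendsto (fun y => D.rho x y) (nhds y0) (nhds (D.rho x y0)) :=
            (D.rho_conty x).continuousAt
          have h3 := h1.div h2 hρ
          rwa [zero_div] at h3
        refine tendsto_of_tendsto_of_tendsto_of_le_of_le' tendsto_const_nhds hub ?_ ?_
        · filter_upwards with y
          rw [qr]
          split_ifs with h
          · exact le_rfl
          · have hθpos : 0 < D.thH y := lt_of_le_of_ne (D.thH_nonneg y) (Ne.symm h)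
            exact div_nonneg hθpos.le (by linarith [D.rho_nonneg x y])
        · filter_upwards [hbpos] with y hy
          rw [qr]
          split_ifs with h
          · rw [h, zero_div]
          · have hθpos : 0 < D.thH y := lt_of_le_of_ne (D.thH_nonneg y) (Ne.symm h)
            exact div_le_div_of_nonneg_left hθpos.le hy (by linarith [D.rho_nonneg x y])
      · have hy0pos : 0 < D.thH y0 := lt_of_le_of_ne (D.thH_nonneg y0) (Ne.symm hy0)
        have hev : ∀ᶠ y in nhds y0, 0 < D.thH y :=
          (isOpen_lt continuous_const D.thH_cont).eventually_mem hy0pos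
        have hform : ContinuousAt (fun y => D.thH y / (D.thH y + D.rho x y)) y0 := by
          have h1 : Tendsto (fun y => D.thH y) (nhds y0) (nhds (D.thH y0)) :=
            D.thH_cont.continuousAt
          have h2 : Tendsto (fun y => D.rho x y) (nhds y0) (nhds (D.rho x y0)) :=
            (D.rho_conty x).continuousAt
          have hne : D.thH y0 + D.rho x y0 ≠ 0 := by
            have := D.rho_nonneg x y0
            intro hc; linarith
          exact h1.div (h1.add h2) hne
        refine hform.congr ?_
        filter_upwards [hev] with y hy
        rw [qr, if_neg (ne_of_gt hy)]
    exact D.lam_cont continuous_const (D.F0_conty x) (continuous_projIcc.comp hqr)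

theorem F_contx (y : X) : Continuous fun x => D.F x y := by
  by_cases hθy : D.thH y = 0
  · have : (fun x => D.F x y) = fun _ => D.c := by
      funext x; rw [F, D.q_zero hθy, D.hl0]
    rw [this]; exact continuous_const
  · have hθpos : 0 < D.thH y := lt_of_le_of_ne (D.thH_nonneg y) (Ne.symm hθy)
    have hqr : Continuous fun x => D.qr x y := by
      have : (fun x => D.qr x y) = fun x => D.thH y / (D.thH y + D.rho x y) := by
        funext x; rw [qr, if_neg hθy]
      rw [this]
      refine Continuous.div continuous_const (continuous_const.add (D.rho_contx y)) ?_
      intro x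
      have := D.rho_nonneg x y
      linarith
    exact D.lam_cont continuous_const (D.F0_contx y) (continuous_projIcc.comp hqr)

theorem exists_F : ∃ F : X → X → Z,
    (∀ x, Continuous (F x)) ∧ (∀ y, Continuous fun x => F x y) ∧ (∀ x, F x x = D.g x) ∧
    (∀ x y, (∀ n, D.h n x = D.c) → F x y = D.c) ∧
    (∀ x y, (∀ n, D.h n y = D.c) → F x y = D.c) :=
  ⟨D.F, D.F_conty, D.F_contx, D.F_diag, fun x y hx => D.F_vanx hx y,
    fun x y hy => D.F_vany hy x⟩

end Gdata
end Gadget4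
section BoxLemmas

variable {S : Type*} {Y : S → Type*} [∀ s, TopologicalSpace (Y s)]

theorem isOpen_box {G : ∀ s, Set (Y s)} (hG : ∀ s, IsOpen (G s)) :
    IsOpen[boxTopology] (Set.univ.pi G) :=
  TopologicalSpace.GenerateOpen.basic _ ⟨G, hG, rfl⟩

theorem continuous_box_proj (s : S) :
    Continuous[boxTopology, inferInstance] fun z : ∀ s, Y s => z s := by
  classical
  rw [continuous_def]
  intro V hV
  have he : (fun z : ∀ s, Y s => z s) ⁻¹' V =
      Set.univ.pi (Function.update (fun t => (Set.univ : Set (Y t))) s V) :=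
    Set.eval_preimage
  rw [he]
  apply isOpen_box
  intro t
  by_cases ht : t = s
  · subst ht; rw [Function.update_self]; exact hV
  · rw [Function.update_of_ne ht]; exact isOpen_univ

theorem continuous_into_box {W : Type*} [TopologicalSpace W] {f : W → ∀ s, Y s}
    (hf : ∀ G : ∀ s, Set (Y s), (∀ s, IsOpen (G s)) → IsOpen (f ⁻¹' Set.univ.pi G)) :
    Continuous[inferInstance, boxTopology] f := by
  apply continuous_generateFrom_iff.mpr
  rintro U ⟨G, hG, rfl⟩
  exact hf G hG

end BoxLemmas
theorem stmt_13 {X : Type*} [TopologicalSpace X] [ParacompactSpace X]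
    {S : Type*} {Z : S → Type*} [∀ s, TopologicalSpace (Z s)]
    [∀ s, TopologicalSpace.MetrizableSpace (Z s)]
    (lam : ∀ s, Z s → Z s → unitInterval → Z s)
    (hlamc : ∀ s, Continuous fun p : Z s × Z s × unitInterval => lam s p.1 p.2.1 p.2.2)
    (h0 : ∀ s (x y : Z s), lam s x y 0 = x)
    (h1 : ∀ s (x y : Z s), lam s x y 1 = y)
    (hd : ∀ s (x : Z s) (t : unitInterval), lam s x x t = x)
    (a : ∀ s, Z s) :
    letI : TopologicalSpace (∀ s, Z s) := boxTopology
    ∀ g : X → ↥(smallBox a),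
      (∃ h : ℕ → X → ↥(smallBox a), (∀ n, Continuous (h n)) ∧
        ∀ x, Tendsto (fun n => h n x) atTop (nhds (g x))) →
      ∃ f : X → X → ↥(smallBox a),
        (∀ x, Continuous (f x)) ∧ (∀ y, Continuous fun x => f x y) ∧
        ∀ x, f x x = g x := by
  intro g hB
  classical
  letI : TopologicalSpace (∀ s, Z s) := boxTopology
  obtain ⟨h, hc, hlim⟩ := hB
  letI M : ∀ s, MetricSpace (Z s) := fun s => TopologicalSpace.metrizableSpaceMetric (Z s)
  have hval : @Continuous (↥(smallBox a)) (∀ s, Z s)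
      (@instTopologicalSpaceSubtype _ _ boxTopology) boxTopology Subtype.val :=
    @continuous_subtype_val _ boxTopology _
  have hprj : ∀ s, Continuous fun z : ↥(smallBox a) => z.1 s :=
    fun s => (continuous_box_proj (Y := Z) s).comp hval
  have hcoordc : ∀ s n, Continuous fun x : X => (h n x).1 s := fun s n => (hprj s).comp (hc n)
  have hcoordlim : ∀ s x, Tendsto (fun n => (h n x).1 s) atTop (nhds ((g x).1 s)) :=
    fun s x => ((hprj s).tendsto (g x)).comp (hlim x)
  have hFF : ∀ s : S, ∃ FF : X → X → Z s,
      (∀ x, Continuous (FF x)) ∧ (∀ y, Continuous fun x => FF x y) ∧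
      (∀ x, FF x x = (g x).1 s) ∧
      (∀ x y, (∀ n, (h n x).1 s = a s) → FF x y = a s) ∧
      (∀ x y, (∀ n, (h n y).1 s = a s) → FF x y = a s) := by
    intro s
    exact (Gdata.mk (lam s) (hlamc s) (h0 s) (h1 s) (hd s) (a s)
      (fun n x => (h n x).1 s) (hcoordc s) (fun x => (g x).1 s) (hcoordlim s)).exists_F
  choose FF hFFy hFFx hFFdiag hFFvx hFFvy using hFF
  -- finiteness of the total support at x
  have hAfin : ∀ x : X, {s | ∃ n, (h n x).1 s ≠ a s}.Finite := by
    intro x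
    have hDfin : ∀ n, {s | (h n x).1 s ≠ (g x).1 s}.Finite := by
      intro n
      apply Set.Finite.subset (Set.Finite.union
        ((h n x).2 : {s | (h n x).1 s ≠ a s}.Finite)
        ((g x).2 : {s | (g x).1 s ≠ a s}.Finite))
      intro s hs
      by_cases h1 : (h n x).1 s = a s
      · right
        simp only [Set.mem_setOf_eq]
        rw [← h1]
        exact Ne.symm hs
      · left; exact h1
    have hUfin : (⋃ n, {s | (h n x).1 s ≠ (g x).1 s}).Finite := by
      by_contra hinf
      set μ : S → ℕ := fun s => if hs : ∃ n, (h n x).1 s ≠ (g x).1 s then hs.choose else 0 with hμ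
      have hμspec : ∀ s, (∃ n, (h n x).1 s ≠ (g x).1 s) → (h (μ s) x).1 s ≠ (g x).1 s := by
        intro s hs
        rw [hμ]
        simp only [dif_pos hs]
        exact hs.choose_spec
      have hunb : ∀ N, ∃ s, (∃ n, (h n x).1 s ≠ (g x).1 s) ∧ N ≤ μ s := by
        intro N
        by_contra hcon
        push_neg at hcon
        apply hinf
        apply Set.Finite.subset (Set.Finite.biUnion (Set.finite_Iio N)
          (fun n _ => hDfin n))
        intro s hs
        obtain ⟨n, hn⟩ := Set.mem_iUnion.mp hs
        have hsex : ∃ n, (h n x).1 s ≠ (g x).1 s := ⟨n, hn⟩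
        exact Set.mem_biUnion (hcon s hsex) (hμspec s hsex)
      set G : ∀ s, Set (Z s) := fun s =>
        if ∃ n, (h n x).1 s ≠ (g x).1 s then {(h (μ s) x).1 s}ᶜ else Set.univ with hG
      have hGopen : ∀ s, IsOpen (G s) := by
        intro s
        rw [hG]
        dsimp only
        split_ifs
        · exact isOpen_compl_singleton
        · exact isOpen_univ
      have hGmem : (g x).1 ∈ Set.univ.pi G := by
        intro s _
        rw [hG]
        dsimp only
        split_ifs with hs
        · simp only [Set.mem_compl_iff, Set.mem_singleton_iff]
          exact fun hmem => hμspec s hs hmem.symm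
        · trivial
      have hvt : Tendsto (fun n => (h n x).1) atTop (nhds (g x).1) :=
        (hval.tendsto (g x)).comp (hlim x)
      have hbox : IsOpen[boxTopology] (Set.univ.pi G) := isOpen_box hGopen
      have hev := hvt.eventually_mem (hbox.mem_nhds hGmem)
      obtain ⟨N, hN⟩ := eventually_atTop.mp hev
      obtain ⟨s, hsex, hsN⟩ := hunb N
      have hmem := hN (μ s) hsN s (Set.mem_univ s)
      rw [hG] at hmem
      dsimp only at hmem
      rw [if_pos hsex] at hmem
      exact hmem rfl
    apply Set.Finite.subset (hUfin.union ((g x).2 : {s | (g x).1 s ≠ a s}.Finite))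
    intro s hs
    obtain ⟨n, hn⟩ := hs
    by_cases h1 : (h n x).1 s = (g x).1 s
    · right
      simp only [Set.mem_setOf_eq]
      rw [← h1]
      exact hn
    · left; exact Set.mem_iUnion.mpr ⟨n, h1⟩
  -- the function
  have hmem : ∀ x y : X, (fun s => FF s x y) ∈ smallBox a := by
    intro x y
    apply Set.Finite.subset (hAfin x)
    intro s hs
    by_contra hcon
    simp only [Set.mem_setOf_eq, not_exists, not_not] at hcon
    exact hs (hFFvx s x y hcon)
  refine ⟨fun x y => ⟨fun s => FF s x y, hmem x y⟩, ?_, ?_, ?_⟩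
  · intro x
    apply continuous_induced_rng.mpr
    apply continuous_into_box
    intro G hG
    by_cases hbad : ∀ s, (∀ n, (h n x).1 s = a s) → a s ∈ G s
    · have hpre : ((fun y => ((⟨fun s => FF s x y, hmem x y⟩ : ↥(smallBox a)) : ∀ s, Z s))
          ⁻¹' Set.univ.pi G) =
          ⋂ s ∈ {s | ∃ n, (h n x).1 s ≠ a s}, {y | FF s x y ∈ G s} := by
        ext y
        simp only [Set.mem_preimage, Set.mem_pi, Set.mem_univ, forall_true_left,
          Set.mem_iInter, Set.mem_setOf_eq]
        constructor
        · intro hall s _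
          exact hall s
        · intro hsome s
          by_cases hs : ∃ n, (h n x).1 s ≠ a s
          · exact hsome s hs
          · simp only [not_exists, not_not] at hs
            rw [hFFvx s x y hs]
            exact hbad s hs
      show IsOpen ((fun y => ((⟨fun s => FF s x y, hmem x y⟩ : ↥(smallBox a)) : ∀ s, Z s))
        ⁻¹' Set.univ.pi G)
      rw [hpre]
      exact Set.Finite.isOpen_biInter (hAfin x)
        (fun s _ => (hG s).preimage (hFFy s x))
    · push_neg at hbad
      obtain ⟨s0, hs0, hs0G⟩ := hbad
      have hpre : ((fun y => ((⟨fun s => FF s x y, hmem x y⟩ : ↥(smallBox a)) : ∀ s, Z s))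
          ⁻¹' Set.univ.pi G) = ∅ := by
        ext y
        simp only [Set.mem_preimage, Set.mem_pi, Set.mem_univ, forall_true_left,
          Set.mem_empty_iff_false, iff_false]
        intro hall
        have := hall s0
        rw [hFFvx s0 x y hs0] at this
        exact hs0G this
      show IsOpen ((fun y => ((⟨fun s => FF s x y, hmem x y⟩ : ↥(smallBox a)) : ∀ s, Z s))
        ⁻¹' Set.univ.pi G)
      rw [hpre]
      exact isOpen_empty
  · intro y
    apply continuous_induced_rng.mpr
    apply continuous_into_box
    intro G hG
    by_cases hbad : ∀ s, (∀ n, (h n y).1 s = a s) → a s ∈ G s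
    · have hpre : ((fun x => ((⟨fun s => FF s x y, hmem x y⟩ : ↥(smallBox a)) : ∀ s, Z s))
          ⁻¹' Set.univ.pi G) =
          ⋂ s ∈ {s | ∃ n, (h n y).1 s ≠ a s}, {x | FF s x y ∈ G s} := by
        ext x
        simp only [Set.mem_preimage, Set.mem_pi, Set.mem_univ, forall_true_left,
          Set.mem_iInter, Set.mem_setOf_eq]
        constructor
        · intro hall s _
          exact hall s
        · intro hsome s
          by_cases hs : ∃ n, (h n y).1 s ≠ a s
          · exact hsome s hs
          · simp only [not_exists, not_not] at hs
            rw [hFFvy s x y hs]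
            exact hbad s hs
      show IsOpen ((fun x => ((⟨fun s => FF s x y, hmem x y⟩ : ↥(smallBox a)) : ∀ s, Z s))
        ⁻¹' Set.univ.pi G)
      rw [hpre]
      exact Set.Finite.isOpen_biInter (hAfin y)
        (fun s _ => (hG s).preimage (hFFx s y))
    · push_neg at hbad
      obtain ⟨s0, hs0, hs0G⟩ := hbad
      have hpre : ((fun x => ((⟨fun s => FF s x y, hmem x y⟩ : ↥(smallBox a)) : ∀ s, Z s))
          ⁻¹' Set.univ.pi G) = ∅ := by
        ext x
        simp only [Set.mem_preimage, Set.mem_pi, Set.mem_univ, forall_true_left,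
          Set.mem_empty_iff_false, iff_false]
        intro hall
        have := hall s0
        rw [hFFvy s0 x y hs0] at this
        exact hs0G this
      show IsOpen ((fun x => ((⟨fun s => FF s x y, hmem x y⟩ : ↥(smallBox a)) : ∀ s, Z s))
        ⁻¹' Set.univ.pi G)
      rw [hpre]
      exact isOpen_empty
  · intro x
    apply Subtype.ext
    funext s
    exact hFFdiag s x
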